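/- Let N be a Hermitian matrix and P₁,Q₁,P₂,Q₂ matrices of compatible sizes, δ₁,δ₂ ≥ 0. Then N ⪰ P₁^H Z₁ Q₁ + Q₁^H Z₁^H P₁ + P₂^H Z₂ Q₂ + Q₂^H Z₂^H P₂ for all Z₁,Z₂ with ‖Z₁‖ ≤ δ₁, ‖Z₂‖ ≤ δ₂, if and only if for every vector u: u^H N u ≥ 2δ₁‖P₁u‖‖Q₁u‖ + 2δ₂‖P₂u‖‖Q₂u‖. -/

import Mathlib

open Matrix
open scoped ComplexOrder

/-- `‖A‖ ≤ δ` in the spectral (operator) norm, encoded in squared form. -/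
def specNormLe {p q : ℕ} (δ : ℝ) (A : Matrix (Fin p) (Fin q) ℂ) : Prop :=
  ∀ v : Fin q → ℂ, ∑ i, Complex.normSq ((A *ᵥ v) i) ≤ δ ^ 2 * ∑ j, Complex.normSq (v j)

open scoped ComplexConjugate

noncomputable def nrm {n : ℕ} (v : Fin n → ℂ) : ℝ := Real.sqrt (∑ i, Complex.normSq (v i))

lemma sumSq_nonneg {n : ℕ} (v : Fin n → ℂ) : 0 ≤ ∑ i, Complex.normSq (v i) :=
  Finset.sum_nonneg fun _ _ => Complex.normSq_nonneg _

lemma nrm_nonneg {n : ℕ} (v : Fin n → ℂ) : 0 ≤ nrm v := Real.sqrt_nonneg _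

lemma nrm_sq {n : ℕ} (v : Fin n → ℂ) : nrm v ^ 2 = ∑ i, Complex.normSq (v i) :=
  Real.sq_sqrt (sumSq_nonneg v)

lemma nrm_eq_norm {n : ℕ} (v : Fin n → ℂ) :
    nrm v = ‖(WithLp.equiv 2 (Fin n → ℂ)).symm v‖ := by
  rw [EuclideanSpace.norm_eq, nrm]
  congr 1
  refine Finset.sum_congr rfl fun i _ => ?_
  rw [Complex.sq_norm]; rfl

lemma cs {n : ℕ} (x w : Fin n → ℂ) :
    ‖star x ⬝ᵥ w‖ ≤ nrm x * nrm w := by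
  have h : star x ⬝ᵥ w = (inner (𝕜 := ℂ)
      ((WithLp.equiv 2 (Fin n → ℂ)).symm x) ((WithLp.equiv 2 (Fin n → ℂ)).symm w) : ℂ) := by
    simp [dotProduct, PiLp.inner_apply, mul_comm]
  rw [h, nrm_eq_norm, nrm_eq_norm]
  exact norm_inner_le_norm (𝕜 := ℂ) _ _

lemma specNorm_mulVec {p q : ℕ} {δ : ℝ} (hδ : 0 ≤ δ) {Z : Matrix (Fin p) (Fin q) ℂ}
    (hZ : specNormLe δ Z) (v : Fin q → ℂ) : nrm (Z *ᵥ v) ≤ δ * nrm v := by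
  have := hZ v
  calc nrm (Z *ᵥ v) ≤ Real.sqrt (δ ^ 2 * ∑ j, Complex.normSq (v j)) := Real.sqrt_le_sqrt this
  _ = δ * nrm v := by
      rw [Real.sqrt_mul (sq_nonneg δ), Real.sqrt_sq hδ]; rfl

lemma key_bound {p q : ℕ} {δ : ℝ} (hδ : 0 ≤ δ) {Z : Matrix (Fin p) (Fin q) ℂ}
    (hZ : specNormLe δ Z) (x : Fin p → ℂ) (y : Fin q → ℂ) :
    ‖star x ⬝ᵥ (Z *ᵥ y)‖ ≤ δ * nrm x * nrm y := by
  calc ‖star x ⬝ᵥ (Z *ᵥ y)‖ ≤ nrm x * nrm (Z *ᵥ y) := cs _ _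
  _ ≤ nrm x * (δ * nrm y) := by
      exact mul_le_mul_of_nonneg_left (specNorm_mulVec hδ hZ y) (nrm_nonneg x)
  _ = δ * nrm x * nrm y := by ring

lemma quad_eq {p q k : ℕ} (P : Matrix (Fin p) (Fin k) ℂ) (Z : Matrix (Fin p) (Fin q) ℂ)
    (Q : Matrix (Fin q) (Fin k) ℂ) (u : Fin k → ℂ) :
    star u ⬝ᵥ ((Pᴴ * Z * Q) *ᵥ u) = star (P *ᵥ u) ⬝ᵥ (Z *ᵥ (Q *ᵥ u)) := by
  rw [← mulVec_mulVec, ← mulVec_mulVec, dotProduct_mulVec, ← star_mulVec]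

lemma quad_conj {k : ℕ} (M : Matrix (Fin k) (Fin k) ℂ) (u : Fin k → ℂ) :
    star u ⬝ᵥ (Mᴴ *ᵥ u) = star (star u ⬝ᵥ (M *ᵥ u)) := by
  rw [dotProduct_mulVec, ← star_mulVec, star_dotProduct]

lemma dot_self {n : ℕ} (x : Fin n → ℂ) :
    star x ⬝ᵥ x = ((∑ i, Complex.normSq (x i) : ℝ) : ℂ) := by
  push_cast
  refine Finset.sum_congr rfl fun i _ => ?_
  simp [Complex.normSq_eq_conj_mul_self]

lemma exists_Z {p q : ℕ} (δ : ℝ) (hδ : 0 ≤ δ) (x : Fin p → ℂ) (y : Fin q → ℂ) :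
    ∃ Z : Matrix (Fin p) (Fin q) ℂ, specNormLe δ Z ∧
      star x ⬝ᵥ (Z *ᵥ y) = ((δ * nrm x * nrm y : ℝ) : ℂ) := by
  by_cases hx : nrm x = 0
  · refine ⟨0, ?_, by simp [hx]⟩
    intro v
    simp only [Matrix.zero_mulVec, Pi.zero_apply, Complex.normSq_zero, Finset.sum_const, smul_zero]
    exact mul_nonneg (sq_nonneg δ) (sumSq_nonneg v)
  by_cases hy : nrm y = 0
  · refine ⟨0, ?_, by simp [hy]⟩
    intro v
    simp only [Matrix.zero_mulVec, Pi.zero_apply, Complex.normSq_zero, Finset.sum_const, smul_zero]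
    exact mul_nonneg (sq_nonneg δ) (sumSq_nonneg v)
  have hx' : 0 < nrm x := lt_of_le_of_ne (nrm_nonneg x) (Ne.symm hx)
  have hy' : 0 < nrm y := lt_of_le_of_ne (nrm_nonneg y) (Ne.symm hy)
  set c : ℝ := δ / (nrm x * nrm y) with hc
  have hcδ : c * (nrm x * nrm y) = δ := by rw [hc]; field_simp
  have hmv : ∀ (v : Fin q → ℂ) i, ((Matrix.of fun i j => (c : ℂ) * x i * star (y j)) *ᵥ v) i
      = (c : ℂ) * x i * (star y ⬝ᵥ v) := by
    intro v i
    simp only [mulVec, dotProduct, Matrix.of_apply, Finset.mul_sum, Pi.star_apply]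
    exact Finset.sum_congr rfl fun j _ => by ring
  refine ⟨Matrix.of fun i j => (c : ℂ) * x i * star (y j), ?_, ?_⟩
  · intro v
    calc ∑ i, Complex.normSq (((Matrix.of fun i j => (c : ℂ) * x i * star (y j)) *ᵥ v) i)
        = Complex.normSq ((c:ℂ)) * Complex.normSq (star y ⬝ᵥ v) * ∑ i, Complex.normSq (x i) := by
          rw [Finset.mul_sum]
          refine Finset.sum_congr rfl fun i _ => ?_
          rw [hmv v i, Complex.normSq_mul, Complex.normSq_mul]; ring
      _ ≤ c ^ 2 * ((nrm y * nrm v) ^ 2) * nrm x ^ 2 := by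
          rw [nrm_sq]
          have h1 : Complex.normSq ((c:ℂ)) = c ^ 2 := by
            rw [Complex.normSq_ofReal]; ring
          have h2 : Complex.normSq (star y ⬝ᵥ v) ≤ (nrm y * nrm v) ^ 2 := by
            rw [← Complex.sq_norm]
            exact pow_le_pow_left₀ (norm_nonneg _) (cs y v) 2
          rw [h1]
          exact mul_le_mul_of_nonneg_right (mul_le_mul_of_nonneg_left h2 (sq_nonneg c))
            (sumSq_nonneg x)
      _ ≤ δ ^ 2 * ∑ j, Complex.normSq (v j) := by
          rw [← nrm_sq v]
          have heq : c ^ 2 * ((nrm y * nrm v) ^ 2) * nrm x ^ 2 = δ ^ 2 * nrm v ^ 2 := by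
            rw [← hcδ]; ring
          exact le_of_eq heq
  · have h1 : star x ⬝ᵥ ((Matrix.of fun i j => (c : ℂ) * x i * star (y j)) *ᵥ y)
        = ∑ i, (star (x i) * x i) * ((c:ℂ) * (star y ⬝ᵥ y)) := by
      simp only [dotProduct, Pi.star_apply]
      refine Finset.sum_congr rfl fun i _ => ?_
      rw [hmv y i]
      simp only [dotProduct, Pi.star_apply]
      ring
    rw [h1, ← Finset.sum_mul]
    have h2 : (∑ i, star (x i) * x i) = star x ⬝ᵥ x := by simp [dotProduct]
    rw [h2, dot_self, dot_self, ← nrm_sq, ← nrm_sq]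
    push_cast
    ring_nf
    rw [← Complex.ofReal_pow, ← Complex.ofReal_pow]
    norm_cast
    field_simp
    rw [← hcδ]; ring

lemma pair_conj {p q k : ℕ} (P : Matrix (Fin p) (Fin k) ℂ) (Z : Matrix (Fin p) (Fin q) ℂ)
    (Q : Matrix (Fin q) (Fin k) ℂ) : Qᴴ * Zᴴ * P = (Pᴴ * Z * Q)ᴴ := by
  simp [conjTranspose_mul, Matrix.mul_assoc]

/-- `N ⪰ P₁ᴴZ₁Q₁ + Q₁ᴴZ₁ᴴP₁ + P₂ᴴZ₂Q₂ + Q₂ᴴZ₂ᴴP₂` for all `‖Z₁‖ ≤ δ₁`, `‖Z₂‖ ≤ δ₂`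
iff `uᴴ N u ≥ 2δ₁‖P₁u‖‖Q₁u‖ + 2δ₂‖P₂u‖‖Q₂u‖` for all `u`. -/
theorem stmt_7 (p₁ q₁ p₂ q₂ k : ℕ) (N : Matrix (Fin k) (Fin k) ℂ) (hN : N.IsHermitian)
    (P₁ : Matrix (Fin p₁) (Fin k) ℂ) (Q₁ : Matrix (Fin q₁) (Fin k) ℂ)
    (P₂ : Matrix (Fin p₂) (Fin k) ℂ) (Q₂ : Matrix (Fin q₂) (Fin k) ℂ)
    (δ₁ δ₂ : ℝ) (hδ₁ : 0 ≤ δ₁) (hδ₂ : 0 ≤ δ₂) :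
    (∀ (Z₁ : Matrix (Fin p₁) (Fin q₁) ℂ) (Z₂ : Matrix (Fin p₂) (Fin q₂) ℂ),
        specNormLe δ₁ Z₁ → specNormLe δ₂ Z₂ →
        (N - (P₁ᴴ * Z₁ * Q₁ + Q₁ᴴ * Z₁ᴴ * P₁ + P₂ᴴ * Z₂ * Q₂ + Q₂ᴴ * Z₂ᴴ * P₂)).PosSemidef)
    ↔ (∀ u : Fin k → ℂ,
        2 * δ₁ * Real.sqrt (∑ i, Complex.normSq ((P₁ *ᵥ u) i)) *
            Real.sqrt (∑ i, Complex.normSq ((Q₁ *ᵥ u) i)) +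
          2 * δ₂ * Real.sqrt (∑ i, Complex.normSq ((P₂ *ᵥ u) i)) *
            Real.sqrt (∑ i, Complex.normSq ((Q₂ *ᵥ u) i))
          ≤ (star u ⬝ᵥ (N *ᵥ u)).re) := by
  constructor
  · intro h u
    obtain ⟨Z₁, hZ₁, hv₁⟩ := exists_Z δ₁ hδ₁ (P₁ *ᵥ u) (Q₁ *ᵥ u)
    obtain ⟨Z₂, hZ₂, hv₂⟩ := exists_Z δ₂ hδ₂ (P₂ *ᵥ u) (Q₂ *ᵥ u)
    have hp := (h Z₁ Z₂ hZ₁ hZ₂).dotProduct_mulVec_nonneg u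
    have hre : 0 ≤ (star u ⬝ᵥ ((N - (P₁ᴴ * Z₁ * Q₁ + Q₁ᴴ * Z₁ᴴ * P₁ + P₂ᴴ * Z₂ * Q₂ +
        Q₂ᴴ * Z₂ᴴ * P₂)) *ᵥ u)).re := (Complex.nonneg_iff.mp hp).1
    have e1 : star u ⬝ᵥ ((P₁ᴴ * Z₁ * Q₁) *ᵥ u)
        = ((δ₁ * nrm (P₁ *ᵥ u) * nrm (Q₁ *ᵥ u) : ℝ) : ℂ) := (quad_eq _ _ _ _).trans hv₁
    have e2 : star u ⬝ᵥ ((P₂ᴴ * Z₂ * Q₂) *ᵥ u)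
        = ((δ₂ * nrm (P₂ *ᵥ u) * nrm (Q₂ *ᵥ u) : ℝ) : ℂ) := (quad_eq _ _ _ _).trans hv₂
    have e1' : star u ⬝ᵥ ((Q₁ᴴ * Z₁ᴴ * P₁) *ᵥ u)
        = ((δ₁ * nrm (P₁ *ᵥ u) * nrm (Q₁ *ᵥ u) : ℝ) : ℂ) := by
      rw [pair_conj, quad_conj, e1]
      exact Complex.conj_ofReal _
    have e2' : star u ⬝ᵥ ((Q₂ᴴ * Z₂ᴴ * P₂) *ᵥ u)
        = ((δ₂ * nrm (P₂ *ᵥ u) * nrm (Q₂ *ᵥ u) : ℝ) : ℂ) := by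
      rw [pair_conj, quad_conj, e2]
      exact Complex.conj_ofReal _
    rw [sub_mulVec, dotProduct_sub, add_mulVec, add_mulVec, add_mulVec, dotProduct_add,
      dotProduct_add, dotProduct_add, e1, e1', e2, e2'] at hre
    simp only [Complex.sub_re, Complex.add_re, Complex.ofReal_re, nrm] at hre ⊢
    linarith
  · intro h Z₁ Z₂ hZ₁ hZ₂
    have hSH : (P₁ᴴ * Z₁ * Q₁ + Q₁ᴴ * Z₁ᴴ * P₁ + P₂ᴴ * Z₂ * Q₂ + Q₂ᴴ * Z₂ᴴ * P₂).IsHermitian := by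
      show _ᴴ = _
      simp only [conjTranspose_add, conjTranspose_mul, conjTranspose_conjTranspose,
        Matrix.mul_assoc]
      abel
    have hNS : (N - (P₁ᴴ * Z₁ * Q₁ + Q₁ᴴ * Z₁ᴴ * P₁ + P₂ᴴ * Z₂ * Q₂ + Q₂ᴴ * Z₂ᴴ * P₂)).IsHermitian :=
      hN.sub hSH
    refine .of_dotProduct_mulVec_nonneg hNS fun u => ?_
    rw [Complex.nonneg_iff]
    constructor
    · have hb1 : (star (P₁ *ᵥ u) ⬝ᵥ (Z₁ *ᵥ (Q₁ *ᵥ u))).re ≤ δ₁ * nrm (P₁ *ᵥ u) * nrm (Q₁ *ᵥ u) :=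
        (Complex.re_le_norm _).trans (key_bound hδ₁ hZ₁ _ _)
      have hb2 : (star (P₂ *ᵥ u) ⬝ᵥ (Z₂ *ᵥ (Q₂ *ᵥ u))).re ≤ δ₂ * nrm (P₂ *ᵥ u) * nrm (Q₂ *ᵥ u) :=
        (Complex.re_le_norm _).trans (key_bound hδ₂ hZ₂ _ _)
      have e1 : star u ⬝ᵥ ((P₁ᴴ * Z₁ * Q₁) *ᵥ u) = star (P₁ *ᵥ u) ⬝ᵥ (Z₁ *ᵥ (Q₁ *ᵥ u)) :=
        quad_eq _ _ _ _
      have e2 : star u ⬝ᵥ ((P₂ᴴ * Z₂ * Q₂) *ᵥ u) = star (P₂ *ᵥ u) ⬝ᵥ (Z₂ *ᵥ (Q₂ *ᵥ u)) :=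
        quad_eq _ _ _ _
      have e1' : star u ⬝ᵥ ((Q₁ᴴ * Z₁ᴴ * P₁) *ᵥ u)
          = star (star (P₁ *ᵥ u) ⬝ᵥ (Z₁ *ᵥ (Q₁ *ᵥ u))) := by rw [pair_conj, quad_conj, e1]
      have e2' : star u ⬝ᵥ ((Q₂ᴴ * Z₂ᴴ * P₂) *ᵥ u)
          = star (star (P₂ *ᵥ u) ⬝ᵥ (Z₂ *ᵥ (Q₂ *ᵥ u))) := by rw [pair_conj, quad_conj, e2]
      have hu := h u
      simp only [nrm] at hb1 hb2
      rw [sub_mulVec, dotProduct_sub, add_mulVec, add_mulVec, add_mulVec, dotProduct_add,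
        dotProduct_add, dotProduct_add, e1, e1', e2, e2']
      simp only [Complex.sub_re, Complex.add_re, Complex.star_def, Complex.conj_re]
      linarith
    · have := quad_conj (N - (P₁ᴴ * Z₁ * Q₁ + Q₁ᴴ * Z₁ᴴ * P₁ + P₂ᴴ * Z₂ * Q₂ + Q₂ᴴ * Z₂ᴴ * P₂)) u
      rw [hNS.eq] at this
      have him := Complex.conj_eq_iff_im.mp this.symm
      exact him.symm
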